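/- Let A ≥ 2 be a real number, and assume that for all sufficiently large positive integers l and every integer b coprime to l there is a prime p ≡ b (mod l) with p < l·(log l)^A. Then for all sufficiently large real z there exists a positive integer j ≤ (log z)^{2A} such that the number of primes q of the form q = g·j + 1, where g ∣ J and g has exactly ⌊log z⌋ distinct prime factors, is at least (z/(15·(log z)²))^{log z} / (log z)^{2A}. -/

import Mathlib

open Finset Real Filter

lemma fact_le_two_mul (k : ℕ) : (k.factorial : ℝ) ≤ 2 * ((k : ℝ) / 2) ^ k := by
  induction k with
  | zero => norm_num
  | succ n ih =>
    rcases Nat.eq_zero_or_pos n with rfl | hn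
    · norm_num
    · have hn0 : (0 : ℝ) < n := by exact_mod_cast hn
      have h2 : (2 : ℝ) * (n : ℝ) ^ n ≤ ((n : ℝ) + 1) ^ n := by
        have hb : (1 : ℝ) + (n : ℝ) * (1 / n) ≤ (1 + 1 / n) ^ n :=
          one_add_mul_le_pow (show (-2:ℝ) ≤ 1/(n:ℝ) by have : (0:ℝ) ≤ 1/(n:ℝ) := (by positivity); linarith) n
        have h22 : (2 : ℝ) ≤ (1 + 1 / n) ^ n := by
          rw [mul_one_div, div_self hn0.ne'] at hb; linarith
        calc (2 : ℝ) * (n : ℝ) ^ n ≤ (1 + 1 / n) ^ n * (n : ℝ) ^ n := by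
              nlinarith [pow_pos hn0 n]
          _ = ((1 + 1 / n) * n) ^ n := (mul_pow _ _ _).symm
          _ = ((n : ℝ) + 1) ^ n := by
              rw [add_mul, one_mul, one_div, inv_mul_cancel₀ hn0.ne', add_comm]
      have hhalf : 2 * ((n : ℝ) / 2) ^ n ≤ (((n : ℝ) + 1) / 2) ^ n := by
        rw [div_pow, div_pow, mul_div_assoc']
        gcongr
      calc (((n + 1).factorial : ℕ) : ℝ) = ((n : ℝ) + 1) * (n.factorial : ℝ) := by
            push_cast [Nat.factorial_succ]; ring
        _ ≤ ((n : ℝ) + 1) * (2 * ((n : ℝ) / 2) ^ n) :=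
            mul_le_mul_of_nonneg_left ih (by positivity)
        _ ≤ ((n : ℝ) + 1) * (((n : ℝ) + 1) / 2) ^ n :=
            mul_le_mul_of_nonneg_left hhalf (by positivity)
        _ = 2 * (((n + 1 : ℕ) : ℝ) / 2) ^ (n + 1) := by
            push_cast; rw [pow_succ]; ring

lemma cheb_nat (n : ℕ) (n_large : 2 < n) :
    Nat.centralBinom n ≤ (2 * n) ^ Nat.sqrt (2 * n) * 4 ^ (2 * n / 3) *
      (2 * n) ^ (((Finset.Ioc n (2 * n)).filter Nat.Prime).card) := by
  have n_pos : 0 < n := lt_of_lt_of_le (by norm_num) n_large.le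
  have n2_pos : 1 ≤ 2 * n := by omega
  set f : ℕ → ℕ := fun x => x ^ (Nat.centralBinom n).factorization x with hf
  have hsplit : Nat.centralBinom n =
      (∏ p ∈ Finset.range (2 * n / 3 + 1), f p) *
      (∏ p ∈ Finset.Ico (2 * n / 3 + 1) (2 * n + 1), f p) := by
    rw [← Nat.prod_pow_factorization_centralBinom n, Finset.range_eq_Ico,
      ← Finset.prod_Ico_consecutive _ (Nat.zero_le _) (by omega : 2 * n / 3 + 1 ≤ 2 * n + 1),
      ← Finset.range_eq_Ico]
  -- first product: as in Mathlib's Bertrand proof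
  have h1 : (∏ p ∈ Finset.range (2 * n / 3 + 1), f p) ≤
      (2 * n) ^ Nat.sqrt (2 * n) * 4 ^ (2 * n / 3) := by
    let S := (Finset.range (2 * n / 3 + 1)).filter Nat.Prime
    have heq : ∏ x ∈ S, f x = ∏ x ∈ Finset.range (2 * n / 3 + 1), f x := by
      refine Finset.prod_filter_of_ne fun p _ h => ?_
      contrapose! h; dsimp only [f]
      rw [Nat.factorization_eq_zero_of_not_prime n.centralBinom h, pow_zero]
    rw [← heq, ← Finset.prod_filter_mul_prod_filter_not S (· ≤ Nat.sqrt (2 * n))]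
    apply Nat.mul_le_mul
    · refine (Finset.prod_le_prod' fun p _ => (?_ : f p ≤ 2 * n)).trans ?_
      · exact Nat.pow_factorization_choose_le (mul_pos two_pos n_pos)
      have : (Finset.Icc 1 (Nat.sqrt (2 * n))).card = Nat.sqrt (2 * n) := by
        rw [Nat.card_Icc, Nat.add_sub_cancel]
      rw [Finset.prod_const]
      refine pow_right_mono₀ n2_pos ((Finset.card_le_card fun x hx => ?_).trans this.le)
      obtain ⟨h1', h2'⟩ := Finset.mem_filter.1 hx
      exact Finset.mem_Icc.mpr ⟨(Finset.mem_filter.1 h1').2.one_lt.le, h2'⟩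
    · refine le_trans ?_ (primorial_le_4_pow (2 * n / 3))
      refine (Finset.prod_le_prod' fun p hp => (?_ : f p ≤ p)).trans ?_
      · obtain ⟨h1', h2'⟩ := Finset.mem_filter.1 hp
        refine (pow_right_mono₀ (Finset.mem_filter.1 h1').2.one_lt.le ?_).trans (pow_one p).le
        exact Nat.factorization_choose_le_one (Nat.sqrt_lt'.mp <| not_le.1 h2')
      refine Finset.prod_le_prod_of_subset_of_one_le' (Finset.filter_subset _ _) ?_
      exact fun p hp _ => (Finset.mem_filter.1 hp).2.one_lt.le
  -- second product
  have h2 : (∏ p ∈ Finset.Ico (2 * n / 3 + 1) (2 * n + 1), f p) ≤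
      (2 * n) ^ (((Finset.Ioc n (2 * n)).filter Nat.Prime).card) := by
    have heq : ∏ p ∈ Finset.Ico (2 * n / 3 + 1) (2 * n + 1), f p =
        ∏ p ∈ (Finset.Ico (2 * n / 3 + 1) (2 * n + 1)).filter
          (fun p => p.Prime ∧ n < p), f p := by
      symm
      refine Finset.prod_filter_of_ne fun p hp h => ?_
      by_contra hcon
      rw [not_and_or] at hcon
      rcases hcon with hnp | hnlt
      · exact h (by rw [hf]; simp [Nat.factorization_eq_zero_of_not_prime n.centralBinom hnp])
      · push_neg at hnlt
        rw [Finset.mem_Ico] at hp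
        have h3p : 2 * n < 3 * p := by omega
        exact h (by rw [hf]; simp
          [Nat.factorization_centralBinom_of_two_mul_self_lt_three_mul n_large hnlt h3p])
    rw [heq]
    calc ∏ p ∈ (Finset.Ico (2 * n / 3 + 1) (2 * n + 1)).filter (fun p => p.Prime ∧ n < p), f p
        ≤ ∏ _p ∈ (Finset.Ico (2 * n / 3 + 1) (2 * n + 1)).filter (fun p => p.Prime ∧ n < p),
            (2 * n) := by
          refine Finset.prod_le_prod' fun p _ => ?_
          exact Nat.pow_factorization_choose_le (mul_pos two_pos n_pos)
      _ = (2 * n) ^ ((Finset.Ico (2 * n / 3 + 1) (2 * n + 1)).filter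
            (fun p => p.Prime ∧ n < p)).card := Finset.prod_const _
      _ ≤ (2 * n) ^ (((Finset.Ioc n (2 * n)).filter Nat.Prime).card) := by
          refine pow_right_mono₀ n2_pos (Finset.card_le_card ?_)
          intro x hx
          rw [Finset.mem_filter, Finset.mem_Ico] at hx
          rw [Finset.mem_filter, Finset.mem_Ioc]
          exact ⟨⟨hx.2.2, by omega⟩, hx.2.1⟩
  calc Nat.centralBinom n = _ := hsplit
    _ ≤ _ := Nat.mul_le_mul h1 h2

lemma cheb_real (n : ℕ) (hn : 512 ≤ n) :
    (n : ℝ) / 3 * Real.log 4 ≤ Real.log n + Real.sqrt (2 * n) * Real.log (2 * n) +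
      (((Finset.Ioc n (2 * n)).filter Nat.Prime).card : ℝ) * Real.log (2 * n) := by
  set m : ℕ := ((Finset.Ioc n (2 * n)).filter Nat.Prime).card with hm
  set s : ℕ := Nat.sqrt (2 * n) with hs
  set t : ℕ := 2 * n / 3 with ht
  have hnat : 4 ^ n ≤ n * ((2 * n) ^ s * 4 ^ t * (2 * n) ^ m) :=
    le_trans (Nat.four_pow_lt_mul_centralBinom n (by omega)).le
      (Nat.mul_le_mul_left n (cheb_nat n (by omega)))
  have hreal : (4 : ℝ) ^ n ≤ (n : ℝ) * ((2 * n) ^ s * 4 ^ t * (2 * n) ^ m) := by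
    exact_mod_cast hnat
  have hn0 : (0 : ℝ) < n := by positivity
  have h2n0 : (0 : ℝ) < 2 * n := by positivity
  have h2n1 : (1 : ℝ) ≤ 2 * (n : ℝ) := by
    have : (1:ℝ) ≤ (n:ℝ) := by exact_mod_cast (by omega : 1 ≤ n)
    linarith
  have hlog : (n : ℝ) * Real.log 4 ≤
      Real.log n + (s * Real.log (2 * n) + t * Real.log 4 + m * Real.log (2 * n)) := by
    have := Real.log_le_log (by positivity) hreal
    rw [Real.log_pow, Real.log_mul hn0.ne' (by positivity), Real.log_mul (by positivity)
      (by positivity), Real.log_mul (by positivity) (by positivity), Real.log_pow,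
      Real.log_pow, Real.log_pow] at this
    push_cast at this ⊢
    linarith
  have hlog2n : (0 : ℝ) ≤ Real.log (2 * n) := Real.log_nonneg h2n1
  have hlog4 : (0 : ℝ) ≤ Real.log 4 := Real.log_nonneg (by norm_num)
  have hsle : (s : ℝ) ≤ Real.sqrt (2 * n) := by
    rw [hs]
    have := Real.nat_sqrt_le_real_sqrt (a := 2 * n)
    convert this using 2
    push_cast
    ring
  have htle : (t : ℝ) ≤ 2 * (n : ℝ) / 3 := by
    rw [ht]
    calc ((2 * n / 3 : ℕ) : ℝ) ≤ ((2 * n : ℕ) : ℝ) / 3 := Nat.cast_div_le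
      _ = 2 * (n : ℝ) / 3 := by push_cast; ring
  have h1 : (s : ℝ) * Real.log (2 * n) ≤ Real.sqrt (2 * n) * Real.log (2 * n) :=
    mul_le_mul_of_nonneg_right hsle hlog2n
  have h2 : (t : ℝ) * Real.log 4 ≤ 2 * (n : ℝ) / 3 * Real.log 4 :=
    mul_le_mul_of_nonneg_right htle hlog4
  linarith

lemma log_le_aux {z : ℝ} (hz : 1 ≤ z) : Real.log z ≤ 10 * z ^ (0.1 : ℝ) := by
  have := Real.log_le_rpow_div (by linarith : (0:ℝ) ≤ z) (by norm_num : (0:ℝ) < 0.1)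
  calc Real.log z ≤ z ^ (0.1:ℝ) / 0.1 := this
    _ = 10 * z ^ (0.1:ℝ) := by ring

lemma evC : ∀ᶠ z : ℝ in atTop, 15 * (Real.log z) ^ 2 ≤ Real.sqrt z := by
  filter_upwards [eventually_ge_atTop 1,
    (tendsto_rpow_atTop (by norm_num : (0:ℝ) < 0.3)).eventually_ge_atTop 1500] with z hz1 hz2
  have hz0 : (0:ℝ) ≤ z := by linarith
  have hlog := log_le_aux hz1
  have hL2 : (Real.log z) ^ 2 ≤ 100 * z ^ (0.2 : ℝ) := by
    calc (Real.log z) ^ 2 ≤ (10 * z ^ (0.1:ℝ)) ^ 2 :=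
          pow_le_pow_left₀ (Real.log_nonneg hz1) hlog 2
      _ = 100 * (z ^ (0.1:ℝ)) ^ (2:ℕ) := by ring
      _ = 100 * z ^ (0.2 : ℝ) := by
          rw [← Real.rpow_natCast (z ^ (0.1:ℝ)) 2, ← Real.rpow_mul hz0]; norm_num
  have hsq : Real.sqrt z = z ^ (0.5 : ℝ) := by
    rw [Real.sqrt_eq_rpow]; norm_num
  have h02 : (0:ℝ) ≤ z ^ (0.2:ℝ) := Real.rpow_nonneg hz0 _
  calc 15 * (Real.log z) ^ 2 ≤ 1500 * z ^ (0.2:ℝ) := by linarith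
    _ ≤ z ^ (0.3:ℝ) * z ^ (0.2:ℝ) := mul_le_mul_of_nonneg_right hz2 h02
    _ = z ^ (0.5:ℝ) := by rw [← Real.rpow_add (by linarith : (0:ℝ) < z)]; norm_num
    _ = Real.sqrt z := hsq.symm

lemma evB : ∀ᶠ z : ℝ in atTop, (Real.sqrt z + 1) * Real.log z + 1 ≤ z / 50 := by
  filter_upwards [eventually_ge_atTop 1,
    (tendsto_rpow_atTop (by norm_num : (0:ℝ) < 0.4)).eventually_ge_atTop 1100] with z hz1 hz2
  have hz0 : (0:ℝ) ≤ z := by linarith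
  have hlog := log_le_aux hz1
  have hL0 : (0:ℝ) ≤ Real.log z := Real.log_nonneg hz1
  have hsq : Real.sqrt z = z ^ (0.5 : ℝ) := by rw [Real.sqrt_eq_rpow]; norm_num
  have hs1 : (1:ℝ) ≤ Real.sqrt z := by
    rw [show (1:ℝ) = Real.sqrt 1 by simp]; exact Real.sqrt_le_sqrt hz1
  have h6 : (Real.sqrt z + 1) * Real.log z ≤ 20 * z ^ (0.6:ℝ) := by
    calc (Real.sqrt z + 1) * Real.log z ≤ (2 * Real.sqrt z) * (10 * z ^ (0.1:ℝ)) := by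
          apply mul_le_mul (by linarith) hlog hL0 (by linarith)
      _ = 20 * (z ^ (0.5:ℝ) * z ^ (0.1:ℝ)) := by rw [hsq]; ring
      _ = 20 * z ^ (0.6:ℝ) := by rw [← Real.rpow_add (by linarith : (0:ℝ) < z)]; norm_num
  have h1z : (1:ℝ) ≤ z ^ (0.6:ℝ) := Real.one_le_rpow hz1 (by norm_num)
  have hzz : 1100 * z ^ (0.6:ℝ) ≤ z := by
    calc 1100 * z ^ (0.6:ℝ) ≤ z ^ (0.4:ℝ) * z ^ (0.6:ℝ) :=
          mul_le_mul_of_nonneg_right hz2 (by positivity)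
      _ = z := by rw [← Real.rpow_add (by linarith : (0:ℝ) < z)]; norm_num
  linarith

lemma evD : ∀ᶠ z : ℝ in atTop, 10 * z ≤ z ^ Real.log 5 := by
  have h5 : 1 < Real.log 5 := by
    have he : Real.exp 1 < 5 := by
      have := Real.exp_one_lt_d9; linarith
    calc (1:ℝ) = Real.log (Real.exp 1) := (Real.log_exp 1).symm
      _ < Real.log 5 := Real.log_lt_log (Real.exp_pos 1) he
  filter_upwards [eventually_ge_atTop 1,
    (tendsto_rpow_atTop (by linarith : (0:ℝ) < Real.log 5 - 1)).eventually_ge_atTop 10]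
    with z hz1 hz2
  have hz0 : (0:ℝ) < z := by linarith
  calc 10 * z ≤ z ^ (Real.log 5 - 1) * z := by
        apply mul_le_mul_of_nonneg_right hz2 (by linarith)
    _ = z ^ (Real.log 5 - 1) * z ^ (1:ℝ) := by rw [Real.rpow_one]
    _ = z ^ Real.log 5 := by rw [← Real.rpow_add hz0]; ring_nf

lemma primes_card_lb (z : ℝ) (hz2000 : 2000 ≤ z)
    (hB : (Real.sqrt z + 1) * Real.log z + 1 ≤ z / 50) :
    z / 5 ≤ ((((Finset.Icc ⌈z / 2⌉₊ ⌊z⌋₊).filter Nat.Prime).card) : ℝ) * Real.log z := by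
  have hz0 : (0 : ℝ) < z := by linarith
  set L := Real.log z with hLdef
  have hL1 : (1 : ℝ) ≤ L := by
    rw [hLdef, show (1:ℝ) = Real.log (Real.exp 1) by simp]
    apply Real.log_le_log (Real.exp_pos 1)
    have := Real.exp_one_lt_d9; linarith
  have hfl_le : (⌊z⌋₊ : ℝ) ≤ z := Nat.floor_le hz0.le
  have hfl_gt : z - 1 < (⌊z⌋₊ : ℝ) := Nat.sub_one_lt_floor z
  have hfl1999 : 1999 ≤ ⌊z⌋₊ := Nat.le_floor (by exact_mod_cast (by linarith : (1999:ℝ) ≤ z))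
  set n := ⌊z⌋₊ / 2 with hndef
  have hn512 : 512 ≤ n := by omega
  have h2n_le : 2 * n ≤ ⌊z⌋₊ := by omega
  have h2n_ge : ⌊z⌋₊ ≤ 2 * n + 1 := by omega
  set m' := ((Finset.Ioc n (2 * n)).filter Nat.Prime).card with hm'def
  have hsub : (Finset.Ioc n (2 * n)).filter Nat.Prime ⊆
      (Finset.Icc ⌈z / 2⌉₊ ⌊z⌋₊).filter Nat.Prime := by
    intro x hx
    rw [Finset.mem_filter, Finset.mem_Ioc] at hx
    rw [Finset.mem_filter, Finset.mem_Icc]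
    have hceil : ⌈z / 2⌉₊ ≤ n + 1 := by
      rw [Nat.ceil_le]
      have h1 : (⌊z⌋₊ : ℝ) ≤ 2 * (n : ℝ) + 1 := by exact_mod_cast h2n_ge
      push_cast
      linarith
    exact ⟨⟨le_trans hceil hx.1.1, le_trans hx.1.2 h2n_le⟩, hx.2⟩
  set M := ((Finset.Icc ⌈z / 2⌉₊ ⌊z⌋₊).filter Nat.Prime).card with hMdef
  have hm'M : m' ≤ M := Finset.card_le_card hsub
  have hnz_lb : (z - 2) / 2 ≤ (n : ℝ) := by
    have h1 : (⌊z⌋₊ : ℝ) ≤ 2 * (n : ℝ) + 1 := by exact_mod_cast h2n_ge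
    linarith
  have hnz_ub : (n : ℝ) ≤ z := by
    have : (n : ℝ) ≤ (⌊z⌋₊ : ℝ) := by exact_mod_cast Nat.div_le_self _ _
    linarith
  have h2nz : 2 * (n : ℝ) ≤ z := by
    have : ((2 * n : ℕ) : ℝ) ≤ (⌊z⌋₊ : ℝ) := by exact_mod_cast h2n_le
    push_cast at this; linarith
  have hn1 : (1 : ℝ) ≤ (n : ℝ) := by exact_mod_cast (by omega : 1 ≤ n)
  have hcheb := cheb_real n hn512
  have hlogn : Real.log n ≤ L := Real.log_le_log (by linarith) hnz_ub
  have hlog2n_le : Real.log (2 * n) ≤ L := Real.log_le_log (by linarith) h2nz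
  have hlog2n_0 : (0 : ℝ) ≤ Real.log (2 * n) := Real.log_nonneg (by linarith)
  have hsqrt : Real.sqrt (2 * n) ≤ Real.sqrt z := Real.sqrt_le_sqrt h2nz
  have hlog4 : (1.386 : ℝ) ≤ Real.log 4 := by
    have h2 := Real.log_two_gt_d9
    have : Real.log 4 = 2 * Real.log 2 := by
      rw [show (4:ℝ) = 2 ^ 2 by norm_num, Real.log_pow]; push_cast; ring
    linarith
  have hterm1 : Real.sqrt (2 * n) * Real.log (2 * n) ≤ Real.sqrt z * L :=
    mul_le_mul hsqrt hlog2n_le hlog2n_0 (Real.sqrt_nonneg z)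
  have hterm2 : (m' : ℝ) * Real.log (2 * n) ≤ (m' : ℝ) * L :=
    mul_le_mul_of_nonneg_left hlog2n_le (Nat.cast_nonneg m')
  have hterm3 : (z - 2) / 2 / 3 * 1.386 ≤ (n : ℝ) / 3 * Real.log 4 := by
    apply mul_le_mul (by linarith) hlog4 (by norm_num) (by positivity)
  have hm'L : z / 5 ≤ (m' : ℝ) * L := by
    linarith [hcheb, hterm1, hterm2, hterm3, hB, hlogn]
  have hmM : (m' : ℝ) ≤ (M : ℝ) := by exact_mod_cast hm'M
  have := mul_le_mul_of_nonneg_right hmM (by linarith : (0:ℝ) ≤ L)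
  linarith

lemma binom_lb (z L : ℝ) (M k : ℕ) (hz1 : 1 ≤ z) (hL2 : 2 ≤ L)
    (hkL : (k : ℝ) ≤ L) (hLk : L - 1 ≤ (k : ℝ)) (hk1 : 1 ≤ k)
    (hCz : 15 * L ^ 2 ≤ z) (h5k : 2 * z ≤ (5 : ℝ) ^ k)
    (hM5 : z / (5 * L) ≤ (M : ℝ)) (hMk10 : 10 * (k : ℝ) ≤ (M : ℝ)) :
    (z / (15 * L ^ 2)) ^ L ≤ (M.choose k : ℝ) := by
  have hz0 : (0 : ℝ) < z := by linarith
  have hL0 : (0 : ℝ) < L := by linarith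
  have hden : (0 : ℝ) < 15 * L ^ 2 := by positivity
  set B0 := z / (15 * L ^ 2) with hB0def
  have hB0pos : (0 : ℝ) < B0 := by positivity
  have hB0_1 : (1 : ℝ) ≤ B0 := (one_le_div hden).mpr hCz
  have hB0z : B0 ≤ z := by
    apply div_le_self hz0.le
    nlinarith [sq_nonneg L]
  have hk0 : (0 : ℝ) < (k : ℝ) := by exact_mod_cast hk1
  have hMpos : (0 : ℝ) < (M : ℝ) := by linarith
  have hkM : k ≤ M := by
    have : (k : ℝ) ≤ (M : ℝ) := by linarith
    exact_mod_cast this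
  have hcast : ((M + 1 - k : ℕ) : ℝ) = (M : ℝ) + 1 - (k : ℝ) := by
    rw [Nat.cast_sub (by omega)]; push_cast; ring
  have h09 : 0.9 * (M : ℝ) ≤ ((M + 1 - k : ℕ) : ℝ) := by
    rw [hcast]; linarith
  have hlb := Nat.pow_le_choose (α := ℝ) k M
  have hfac := fact_le_two_mul k
  have hfacpos : (0 : ℝ) < (k.factorial : ℝ) := by exact_mod_cast k.factorial_pos
  have step1 : (0.9 * (M : ℝ)) ^ k / (2 * ((k : ℝ) / 2) ^ k) ≤
      (((M + 1 - k : ℕ) : ℝ)) ^ k / (k.factorial : ℝ) := by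
    apply div_le_div₀ (by positivity) (pow_le_pow_left₀ (by positivity) h09 k) hfacpos hfac
  have hlb' : (((M + 1 - k : ℕ) : ℝ)) ^ k / (k.factorial : ℝ) ≤ (M.choose k : ℝ) := hlb
  have step2 : (0.9 * (M : ℝ)) ^ k / (2 * ((k : ℝ) / 2) ^ k) =
      (0.9 * (M : ℝ) / ((k : ℝ) / 2)) ^ k / 2 := by
    symm; rw [div_pow, div_div, mul_comm (((k : ℝ) / 2) ^ k) 2]
  have hz5LM : z ≤ 5 * L * (M : ℝ) := by
    rw [div_le_iff₀ (by positivity)] at hM5; linarith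
  have step3 : z / (3 * L ^ 2) ≤ 0.9 * (M : ℝ) / ((k : ℝ) / 2) := by
    rw [div_le_div_iff₀ (by positivity) (by positivity)]
    have h1 : z * (k : ℝ) ≤ z * L := mul_le_mul_of_nonneg_left hkL hz0.le
    have h2 : z * L ≤ 5 * L * (M : ℝ) * L := mul_le_mul_of_nonneg_right hz5LM hL0.le
    nlinarith [h1, h2]
  have step4 : (z / (3 * L ^ 2)) ^ k ≤ (0.9 * (M : ℝ) / ((k : ℝ) / 2)) ^ k :=
    pow_le_pow_left₀ (by positivity) step3 k
  have step5 : B0 ^ L ≤ B0 ^ k * z := by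
    have e1 : (k : ℝ) + (L - (k : ℝ)) = L := by ring
    have e2 : B0 ^ L = B0 ^ ((k : ℝ)) * B0 ^ (L - (k : ℝ)) := by
      rw [← Real.rpow_add hB0pos, e1]
    rw [e2, Real.rpow_natCast]
    apply mul_le_mul_of_nonneg_left _ (by positivity)
    calc B0 ^ (L - (k : ℝ)) ≤ B0 ^ (1 : ℝ) :=
          Real.rpow_le_rpow_of_exponent_le hB0_1 (by linarith)
      _ = B0 := Real.rpow_one B0
      _ ≤ z := hB0z
  have e3 : z / (3 * L ^ 2) = 5 * B0 := by
    rw [hB0def]; field_simp; ring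
  have step6 : B0 ^ k * z ≤ (z / (3 * L ^ 2)) ^ k / 2 := by
    rw [e3, mul_pow]
    have h1 : 2 * z * B0 ^ k ≤ 5 ^ k * B0 ^ k :=
      mul_le_mul_of_nonneg_right h5k (by positivity)
    linarith
  calc B0 ^ L ≤ B0 ^ k * z := step5
    _ ≤ (z / (3 * L ^ 2)) ^ k / 2 := step6
    _ ≤ (0.9 * (M : ℝ) / ((k : ℝ) / 2)) ^ k / 2 := by linarith [step4]
    _ = (0.9 * (M : ℝ)) ^ k / (2 * ((k : ℝ) / 2) ^ k) := step2.symm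
    _ ≤ (((M + 1 - k : ℕ) : ℝ)) ^ k / (k.factorial : ℝ) := step1
    _ ≤ (M.choose k : ℝ) := hlb'

lemma exists_j_aux (A : ℝ) (hA0 : 0 ≤ A) (z : ℝ) (hz2000 : 2000 ≤ z)
    (L₀ : ℕ) (hL₀ : ∀ l : ℕ, l ≥ L₀ → ∀ b : ℕ, Nat.Coprime b l →
      ∃ p : ℕ, p.Prime ∧ p ≡ b [MOD l] ∧ (p : ℝ) < (l : ℝ) * (Real.log l) ^ A)
    (hzL₀ : 2 * (L₀ : ℝ) + 4 ≤ z)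
    (s : Finset ℕ) (hsubP : s ⊆ (Finset.Icc ⌈z / 2⌉₊ ⌊z⌋₊).filter Nat.Prime)
    (hcard : s.card = ⌊Real.log z⌋₊) (hL2 : 2 ≤ Real.log z) :
    ∃ j : ℕ, 0 < j ∧ (j : ℝ) ≤ (Real.log z) ^ (2 * A) ∧ ((∏ p ∈ s, p) * j + 1).Prime := by
  set L := Real.log z with hLdef
  have hz0 : (0 : ℝ) < z := by linarith
  have hL0 : (0 : ℝ) < L := by linarith
  have hprimes : ∀ p ∈ s, p.Prime := fun p hp => (Finset.mem_filter.mp (hsubP hp)).2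
  set g := ∏ p ∈ s, p with hgdef
  have hg0 : 0 < g := Finset.prod_pos fun p hp => (hprimes p hp).pos
  have hk1 : 1 ≤ s.card := by
    rw [hcard]
    exact Nat.le_floor (by exact_mod_cast (by linarith : (1:ℝ) ≤ L))
  obtain ⟨p₀, hp₀⟩ := Finset.card_pos.mp hk1
  have hp₀mem := Finset.mem_filter.mp (hsubP hp₀)
  have hp₀lb : ⌈z / 2⌉₊ ≤ p₀ := (Finset.mem_Icc.mp hp₀mem.1).1
  have hp₀g : p₀ ≤ g := Nat.le_of_dvd hg0 (Finset.dvd_prod_of_mem _ hp₀)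
  have hgz2 : z / 2 ≤ (g : ℝ) := by
    calc z / 2 ≤ (⌈z / 2⌉₊ : ℝ) := Nat.le_ceil _
      _ ≤ (p₀ : ℝ) := by exact_mod_cast hp₀lb
      _ ≤ (g : ℝ) := by exact_mod_cast hp₀g
  have hgL₀ : g ≥ L₀ := by
    have : (L₀ : ℝ) ≤ (g : ℝ) := by linarith
    exact_mod_cast this
  obtain ⟨p, hp, hmod, hplt⟩ := hL₀ g hgL₀ 1 (Nat.coprime_one_left g)
  have hg2 : 2 ≤ g := le_trans (hprimes p₀ hp₀).two_le hp₀g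
  have hdvd : g ∣ p - 1 := (Nat.modEq_iff_dvd' hp.one_lt.le).mp hmod.symm
  set j := (p - 1) / g with hjdef
  have hjg : g * j = p - 1 := Nat.mul_div_cancel' hdvd
  have hp2 : 2 ≤ p := hp.two_le
  have hpj : p = g * j + 1 := by omega
  have hj0 : 0 < j := by
    rcases Nat.eq_zero_or_pos j with h0 | h
    · exfalso; rw [h0, Nat.mul_zero] at hjg; omega
    · exact h
  have hg0' : (0 : ℝ) < (g : ℝ) := by exact_mod_cast hg0
  have hjlt : (j : ℝ) < (Real.log g) ^ A := by
    have hpr : ((g : ℝ) * j + 1) < (g : ℝ) * (Real.log g) ^ A := by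
      have : ((p : ℕ) : ℝ) = (g : ℝ) * j + 1 := by exact_mod_cast congrArg Nat.cast hpj
      linarith [hplt, this.symm.le, this ▸ hplt]
    have h2 : (g : ℝ) * (j : ℝ) < (g : ℝ) * (Real.log g) ^ A := by linarith
    exact (mul_lt_mul_iff_right₀ hg0').mp h2
  have hfl1 : 1 ≤ ⌊z⌋₊ := Nat.le_floor (by exact_mod_cast (by linarith : (1:ℝ) ≤ z))
  have hgle : g ≤ ⌊z⌋₊ ^ s.card :=
    Finset.prod_le_pow_card s _ ⌊z⌋₊
      (fun q hq => (Finset.mem_Icc.mp (Finset.mem_filter.mp (hsubP hq)).1).2)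
  have hlogg0 : 0 ≤ Real.log g := Real.log_nonneg (by exact_mod_cast hg0)
  have hloggle : Real.log g ≤ L * L := by
    have h1 : Real.log g ≤ (s.card : ℝ) * Real.log ⌊z⌋₊ := by
      calc Real.log g ≤ Real.log (⌊z⌋₊ ^ s.card) :=
            Real.log_le_log (by exact_mod_cast hg0) (by exact_mod_cast hgle)
        _ = (s.card : ℝ) * Real.log ⌊z⌋₊ := by rw [Real.log_pow]
    have h2 : Real.log ⌊z⌋₊ ≤ L := Real.log_le_log (by exact_mod_cast hfl1) (Nat.floor_le hz0.le)
    have h3 : (s.card : ℝ) ≤ L := by rw [hcard]; exact Nat.floor_le hL0.le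
    have h4 : 0 ≤ Real.log (⌊z⌋₊ : ℝ) := Real.log_nonneg (by exact_mod_cast hfl1)
    calc Real.log g ≤ (s.card : ℝ) * Real.log ⌊z⌋₊ := h1
      _ ≤ L * Real.log ⌊z⌋₊ := mul_le_mul_of_nonneg_right h3 h4
      _ ≤ L * L := mul_le_mul_of_nonneg_left h2 hL0.le
  have hjle : (j : ℝ) ≤ L ^ (2 * A) := by
    have hfin : (Real.log g) ^ A ≤ L ^ (2 * A) := by
      rw [Real.rpow_mul hL0.le, show (2:ℝ) = ((2:ℕ):ℝ) by norm_num, Real.rpow_natCast]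
      apply Real.rpow_le_rpow hlogg0 _ hA0
      rw [pow_two]; exact hloggle
    linarith [hjlt]
  exact ⟨j, hj0, hjle, by show (g * j + 1).Prime; rw [← hpj]; exact hp⟩

/-- Assuming the strong Heath-Brown conjecture with exponent `A`, for all
sufficiently large real `z` there is a positive integer `j ≤ (log z)^{2A}`
such that the number of primes `q = g·j + 1` with `g ∣ J` and
`ω(g) = ⌊log z⌋` is at least `(z / (15 (log z)²))^{log z} / (log z)^{2A}`. -/
theorem exists_good_j (A : ℝ) (hA : 2 ≤ A)
    (hHB : ∀ᶠ l : ℕ in Filter.atTop, ∀ b : ℕ, Nat.Coprime b l →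
      ∃ p : ℕ, p.Prime ∧ p ≡ b [MOD l] ∧ (p : ℝ) < (l : ℝ) * (Real.log l) ^ A) :
    ∀ᶠ z : ℝ in Filter.atTop, ∃ j : ℕ, 0 < j ∧ (j : ℝ) ≤ (Real.log z) ^ (2 * A) ∧
      (z / (15 * (Real.log z) ^ 2)) ^ Real.log z / (Real.log z) ^ (2 * A) ≤
        (((Nat.divisors (∏ r ∈ (Finset.Icc ⌈z / 2⌉₊ ⌊z⌋₊).filter Nat.Prime, r)).filter
          (fun g => g.primeFactors.card = ⌊Real.log z⌋₊ ∧ (g * j + 1).Prime)).card : ℝ) := by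
  classical
  obtain ⟨L₀, hL₀⟩ := Filter.eventually_atTop.mp hHB
  have hA0 : (0 : ℝ) ≤ A := by linarith
  filter_upwards [eventually_ge_atTop (2000 : ℝ), eventually_ge_atTop (2 * (L₀ : ℝ) + 4),
    Real.tendsto_log_atTop.eventually_ge_atTop 2, evB, evC, evD] with z hz2000 hzL₀ hL2 hB hC hD
  have hz0 : (0 : ℝ) < z := by linarith
  set L := Real.log z with hLdef
  set k := ⌊L⌋₊ with hkdef
  set P := (Finset.Icc ⌈z / 2⌉₊ ⌊z⌋₊).filter Nat.Prime with hPdef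
  set M := P.card with hMdef
  have hL0 : (0 : ℝ) < L := by linarith
  have hk1 : 1 ≤ k := Nat.le_floor (by exact_mod_cast (by linarith : (1:ℝ) ≤ L))
  have hkL : (k : ℝ) ≤ L := Nat.floor_le hL0.le
  have hLk : L - 1 ≤ (k : ℝ) := by have := Nat.lt_floor_add_one L; linarith
  have hML : z / 5 ≤ (M : ℝ) * L := primes_card_lb z hz2000 hB
  have hM5 : z / (5 * L) ≤ (M : ℝ) := by
    rw [div_le_iff₀ (by positivity)]; nlinarith [hML]
  have hsqz : Real.sqrt z * Real.sqrt z = z := Real.mul_self_sqrt hz0.le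
  have hsqz60 : (60 : ℝ) ≤ Real.sqrt z := by nlinarith [hC, hL2]
  have hsqz_le : Real.sqrt z ≤ z := by nlinarith [hsqz, hsqz60]
  have hCz : 15 * L ^ 2 ≤ z := le_trans hC hsqz_le
  have h50L : 50 * L ^ 2 ≤ z := by
    have h1 : (0:ℝ) ≤ L ^ 2 := sq_nonneg L
    have h4s : 4 * Real.sqrt z ≤ z := by nlinarith [hsqz, hsqz60, Real.sqrt_nonneg z]
    linarith [hC]
  have hMk10 : 10 * (k : ℝ) ≤ (M : ℝ) := by
    have h1 : 10 * L ≤ z / (5 * L) := by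
      rw [le_div_iff₀ (by positivity)]; nlinarith [h50L]
    linarith [hkL, hM5]
  have h5k : 2 * z ≤ (5 : ℝ) ^ k := by
    have hlog5 : z ^ Real.log 5 = (5 : ℝ) ^ L := by
      rw [Real.rpow_def_of_pos hz0, Real.rpow_def_of_pos (by norm_num : (0:ℝ) < 5), mul_comm]
    have h2 : (5 : ℝ) ^ (L - 1) ≤ (5 : ℝ) ^ ((k : ℕ) : ℝ) :=
      Real.rpow_le_rpow_of_exponent_le (by norm_num) hLk
    have h3 : (5 : ℝ) ^ ((k : ℕ) : ℝ) = (5 : ℝ) ^ k := Real.rpow_natCast 5 k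
    have h4 : (5 : ℝ) ^ (L - 1) = (5 : ℝ) ^ L / 5 := by
      rw [Real.rpow_sub (by norm_num), Real.rpow_one]
    calc 2 * z = 10 * z / 5 := by ring
      _ ≤ z ^ Real.log 5 / 5 := by linarith [hD]
      _ = (5 : ℝ) ^ L / 5 := by rw [hlog5]
      _ = (5 : ℝ) ^ (L - 1) := h4.symm
      _ ≤ (5 : ℝ) ^ ((k : ℕ) : ℝ) := h2
      _ = (5 : ℝ) ^ k := h3
  have hchoose : (z / (15 * L ^ 2)) ^ L ≤ (M.choose k : ℝ) :=
    binom_lb z L M k (by linarith) hL2 hkL hLk hk1 hCz h5k hM5 hMk10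
  set B := ⌊L ^ (2 * A)⌋₊ with hBdef
  have hLA1 : (1 : ℝ) ≤ L ^ (2 * A) := Real.one_le_rpow (by linarith) (by linarith)
  have hB1 : 1 ≤ B := Nat.le_floor (by exact_mod_cast hLA1)
  have hBpos : (0 : ℝ) < (B : ℝ) := by exact_mod_cast hB1
  have hBle : (B : ℝ) ≤ L ^ (2 * A) := Nat.floor_le (by positivity)
  set S := Finset.powersetCard k P with hSdef
  have hScard : S.card = M.choose k := Finset.card_powersetCard k P
  have hex : ∀ s ∈ S, ∃ j : ℕ, 0 < j ∧ (j : ℝ) ≤ L ^ (2 * A) ∧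
      ((∏ p ∈ s, p) * j + 1).Prime := by
    intro s hs
    rw [hSdef, Finset.mem_powersetCard] at hs
    exact exists_j_aux A hA0 z hz2000 L₀ hL₀ hzL₀ s hs.1 hs.2 hL2
  set F : Finset ℕ → ℕ := fun s =>
    if h : ∃ j : ℕ, 0 < j ∧ (j : ℝ) ≤ L ^ (2 * A) ∧ ((∏ p ∈ s, p) * j + 1).Prime
    then h.choose else 0 with hFdef
  have hF : ∀ s ∈ S, 0 < F s ∧ ((F s : ℕ) : ℝ) ≤ L ^ (2 * A) ∧
      ((∏ p ∈ s, p) * F s + 1).Prime := by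
    intro s hs
    have h := hex s hs
    simp only [hFdef, dif_pos h]
    exact h.choose_spec
  have hmaps : ∀ s ∈ S, F s ∈ Finset.Icc 1 B := by
    intro s hs
    obtain ⟨h1, h2, _⟩ := hF s hs
    exact Finset.mem_Icc.mpr ⟨h1, Nat.le_floor h2⟩
  have hsum : S.card = ∑ j ∈ Finset.Icc 1 B, (S.filter (fun s => F s = j)).card :=
    Finset.card_eq_sum_card_fiberwise hmaps
  have htne : (Finset.Icc 1 B).Nonempty := ⟨1, Finset.mem_Icc.mpr ⟨le_refl 1, hB1⟩⟩
  have hcardIcc : (Finset.Icc 1 B).card = B := by rw [Nat.card_Icc]; omega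
  obtain ⟨j, hjmem, hjfib⟩ : ∃ j ∈ Finset.Icc 1 B,
      (S.card : ℝ) / (B : ℝ) ≤ ((S.filter (fun s => F s = j)).card : ℝ) := by
    refine Finset.exists_le_of_sum_le htne ?_
    rw [Finset.sum_const, hcardIcc, nsmul_eq_mul, ← Nat.cast_sum, ← hsum]
    exact le_of_eq (by field_simp)
  refine ⟨j, (Finset.mem_Icc.mp hjmem).1, ?_, ?_⟩
  · calc (j : ℝ) ≤ (B : ℝ) := by exact_mod_cast (Finset.mem_Icc.mp hjmem).2
      _ ≤ L ^ (2 * A) := hBle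
  · have hJne : (∏ r ∈ P, r) ≠ 0 :=
      (Finset.prod_pos fun r hr => (Finset.mem_filter.mp hr).2.pos).ne'
    have hinj : (S.filter (fun s => F s = j)).card ≤
        ((Nat.divisors (∏ r ∈ P, r)).filter
          (fun g => g.primeFactors.card = k ∧ (g * j + 1).Prime)).card := by
      apply Finset.card_le_card_of_injOn (fun s => ∏ p ∈ s, p)
      · intro s hs
        rw [Finset.mem_coe, Finset.mem_filter] at hs
        obtain ⟨hsS, hFs⟩ := hs
        have hsP := Finset.mem_powersetCard.mp (by rwa [hSdef] at hsS)
        have hprimes : ∀ p ∈ s, p.Prime := fun p hp => (Finset.mem_filter.mp (hsP.1 hp)).2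
        rw [Finset.mem_coe, Finset.mem_filter, Nat.mem_divisors]
        refine ⟨⟨Finset.prod_dvd_prod_of_subset s P _ hsP.1, hJne⟩, ?_, ?_⟩
        · rw [Nat.primeFactors_prod hprimes, hsP.2]
        · have := (hF s hsS).2.2
          rwa [hFs] at this
      · intro s₁ h₁ s₂ h₂ heq
        obtain ⟨h₁a, -⟩ := Finset.mem_filter.mp (Finset.mem_coe.mp h₁)
        obtain ⟨h₂a, -⟩ := Finset.mem_filter.mp (Finset.mem_coe.mp h₂)
        rw [hSdef] at h₁a h₂a
        have hsP₁ := Finset.mem_powersetCard.mp h₁a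
        have hsP₂ := Finset.mem_powersetCard.mp h₂a
        have hp₁ : ∀ p ∈ s₁, p.Prime := fun p hp => (Finset.mem_filter.mp (hsP₁.1 hp)).2
        have hp₂ : ∀ p ∈ s₂, p.Prime := fun p hp => (Finset.mem_filter.mp (hsP₂.1 hp)).2
        rw [← Nat.primeFactors_prod hp₁, ← Nat.primeFactors_prod hp₂]
        exact congrArg _ heq
    have hrpos : (0 : ℝ) < L ^ (2 * A) := Real.rpow_pos_of_pos hL0 _
    calc (z / (15 * L ^ 2)) ^ L / L ^ (2 * A)
        ≤ (M.choose k : ℝ) / L ^ (2 * A) := by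
          exact (div_le_div_iff_of_pos_right hrpos).mpr hchoose
      _ = (S.card : ℝ) / L ^ (2 * A) := by rw [hScard]
      _ ≤ (S.card : ℝ) / (B : ℝ) :=
          div_le_div_of_nonneg_left (Nat.cast_nonneg _) hBpos hBle
      _ ≤ ((S.filter (fun s => F s = j)).card : ℝ) := hjfib
      _ ≤ _ := by exact_mod_cast hinj
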